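/- Upper tail bound for a slowed one-way epidemic: Let 0 < ρ ≤ 1 be a real number, 2 ≤ m ≤ n integers, and γ > 0 a real number. Let X = X_1 + ... + X_{m-1}, where the X_i are independent geometric random variables and X_i has success probability (ρ/4)·i·(m-i)/(n·(n-1)). Then P(X > (16/ρ)·(n²/m)·(log₂ m + 2γ·log₂ n)) ≤ 2·n^{-γ}. -/

import Mathlib

open MeasureTheory ProbabilityTheory Real


lemma logb_two_three : (3:ℝ)/2 ≤ Real.logb 2 3 := by
  have hlog2 : (0:ℝ) < Real.log 2 := Real.log_pos (by norm_num)
  have h89 : Real.log 8 ≤ Real.log 9 := Real.log_le_log (by norm_num) (by norm_num)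
  rw [show (8:ℝ) = 2 ^ 3 by norm_num, show (9:ℝ) = 3 ^ 2 by norm_num,
    Real.log_pow, Real.log_pow] at h89
  rw [Real.logb, le_div_iff₀ hlog2]
  push_cast at h89
  nlinarith

/-- Harmonic numbers are bounded by the base-2 logarithm. -/
lemma harmonic_le_logb_two (k : ℕ) (hk : 1 ≤ k) :
    ∑ i ∈ Finset.range k, (1 : ℝ) / (i + 1) ≤ Real.logb 2 (k + 1) := by
  have hlog2 : (0:ℝ) < Real.log 2 := Real.log_pos (by norm_num)
  induction k with
  | zero => omega
  | succ k ih =>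
    rcases Nat.lt_or_ge k 2 with hk2 | hk2
    · interval_cases k
      · -- sum = 1 = logb 2 2
        rw [Finset.sum_range_one]
        norm_num
      · -- 3/2 ≤ logb 2 3
        rw [Finset.sum_range_succ, Finset.sum_range_one]
        have := logb_two_three
        push_cast
        norm_num
        exact this
    · -- inductive step, k ≥ 2
      have ih' := ih (by omega)
      rw [Finset.sum_range_succ]
      have hstep : (1:ℝ) / (k + 1) ≤ Real.logb 2 ((k:ℝ) + 2) - Real.logb 2 ((k:ℝ) + 1) := by
        have hlog : Real.log (((k:ℝ) + 1) / ((k:ℝ) + 2)) ≤ ((k:ℝ) + 1) / ((k:ℝ) + 2) - 1 :=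
          Real.log_le_sub_one_of_pos (by positivity)
        rw [Real.log_div (by positivity) (by positivity)] at hlog
        have heq : ((k:ℝ) + 1) / ((k:ℝ) + 2) - 1 = -(1 / ((k:ℝ) + 2)) := by
          field_simp <;> norm_num
        have hgap : 1 / ((k:ℝ) + 2) ≤ Real.log ((k:ℝ) + 2) - Real.log ((k:ℝ) + 1) := by
          rw [heq] at hlog; linarith
        have hln2 : Real.log 2 < 0.6931471808 := Real.log_two_lt_d9
        have hkR : (2:ℝ) ≤ (k:ℝ) := by exact_mod_cast hk2
        rw [Real.logb, Real.logb, div_sub_div_same, le_div_iff₀ hlog2]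
        calc (1:ℝ) / ((k:ℝ) + 1) * Real.log 2 ≤ 1 / ((k:ℝ) + 2) := by
              rw [div_mul_eq_mul_div, div_le_div_iff₀ (by positivity) (by positivity)]
              nlinarith
          _ ≤ Real.log ((k:ℝ) + 2) - Real.log ((k:ℝ) + 1) := hgap
      push_cast at ih' hstep ⊢
      rw [show (k:ℝ) + 1 + 1 = (k:ℝ) + 2 from by ring]
      linarith


lemma geom_mgf {Ω : Type*} [MeasurableSpace Ω] (μ : Measure Ω) [IsProbabilityMeasure μ]
    (Y : Ω → ℕ) (hY : Measurable Y) (p : ℝ) (hp0 : 0 < p) (hp1 : p < 1)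
    (hpmf : ∀ j : ℕ, 1 ≤ j → μ {ω | Y ω = j} = ENNReal.ofReal ((1 - p) ^ (j - 1) * p))
    (θ : ℝ) (hθ0 : 0 ≤ θ) (hθp : θ < p) :
    Integrable (fun ω => exp (θ * (Y ω : ℝ))) μ ∧
      mgf (fun ω => (Y ω : ℝ)) μ θ ≤ p / (p - θ) := by
  have hexpθ : exp θ * (1 - θ) ≤ 1 := by
    have h1 : 1 - θ ≤ exp (-θ) := by linarith [Real.add_one_le_exp (-θ)]
    rw [Real.exp_neg] at h1
    have h2 : (0:ℝ) < exp θ := Real.exp_pos θ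
    have h3 : exp θ * (exp θ)⁻¹ = 1 := mul_inv_cancel₀ (ne_of_gt h2)
    nlinarith
  set r : ℝ := (1 - p) * exp θ with hr_def
  have hr0 : 0 ≤ r := mul_nonneg (by linarith) (Real.exp_pos θ).le
  have hr1 : r < 1 := by
    have h2 : (0:ℝ) < exp θ := Real.exp_pos θ
    nlinarith
  have h1r : 0 < 1 - r := by linarith
  set ν : Measure ℕ := μ.map Y with hν_def
  have : IsProbabilityMeasure ν := Measure.isProbabilityMeasure_map hY.aemeasurable
  have hνj : ∀ j : ℕ, 1 ≤ j → ν {j} = ENNReal.ofReal ((1 - p) ^ (j - 1) * p) := by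
    intro j hj
    rw [hν_def, Measure.map_apply hY (measurableSet_singleton j)]
    exact hpmf j hj
  -- ν {0} = 0
  have hν0 : ν {0} = 0 := by
    have hcover : (Set.univ : Set ℕ) = ⋃ j : ℕ, {j} := (Set.iUnion_of_singleton ℕ).symm
    have hdisj : Pairwise (Function.onFun Disjoint fun j : ℕ => ({j} : Set ℕ)) := by
      intro a b hab
      simp [Function.onFun, Set.disjoint_singleton, hab]
    have htot : ∑' j : ℕ, ν {j} = 1 := by
      rw [← measure_iUnion hdisj (fun j => measurableSet_singleton j), ← hcover]
      exact measure_univ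
    have hsplit : ∑' j : ℕ, ν {j} = ν {0} + ∑' k : ℕ, ν {k + 1} :=
      tsum_eq_zero_add' ENNReal.summable
    have htail : ∑' k : ℕ, ν {k + 1} = 1 := by
      have h1 : ∀ k : ℕ, ν {k + 1} = ENNReal.ofReal ((1 - p) ^ k * p) := by
        intro k; rw [hνj (k + 1) (by omega)]; norm_num
      have hsummable : Summable (fun k : ℕ => (1 - p) ^ k * p) :=
        (summable_geometric_of_lt_one (by linarith) (by linarith)).mul_right p
      calc ∑' k : ℕ, ν {k + 1} = ∑' k : ℕ, ENNReal.ofReal ((1 - p) ^ k * p) := by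
            exact tsum_congr h1
        _ = ENNReal.ofReal (∑' k : ℕ, (1 - p) ^ k * p) :=
            (ENNReal.ofReal_tsum_of_nonneg
              (fun k => mul_nonneg (pow_nonneg (by linarith) k) hp0.le) hsummable).symm
        _ = 1 := by
            rw [tsum_mul_right, tsum_geometric_of_lt_one (by linarith) (by linarith)]
            rw [show (1 : ℝ) - (1 - p) = p by ring, inv_mul_cancel₀ (ne_of_gt hp0)]
            simp
    rw [htot, htail] at hsplit
    have h0 : ν {0} + 1 = 0 + 1 := by rw [← hsplit, zero_add]
    exact (ENNReal.add_left_inj ENNReal.one_ne_top).mp h0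

  set g : ℕ → ℝ := fun j => exp (θ * j) with hg_def
  have hg_nonneg : ∀ j, 0 ≤ g j := fun j => (Real.exp_pos _).le
  have hg_meas : Measurable g := measurable_from_nat
  have hterm : ∀ k : ℕ, g (k + 1) * ((1 - p) ^ k * p) = (p * exp θ) * r ^ k := by
    intro k
    have hgk : g (k + 1) = exp θ * exp θ ^ k := by
      rw [hg_def]
      simp only []
      push_cast
      rw [show θ * ((k : ℝ) + 1) = (k : ℝ) * θ + θ by ring, Real.exp_add,
        Real.exp_nat_mul]
      ring
    rw [hgk, hr_def, mul_pow]
    ring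
  have hsum_r : Summable (fun k : ℕ => (p * exp θ) * r ^ k) :=
    (summable_geometric_of_lt_one hr0 hr1).mul_left _
  -- Integrability on the mapped measure
  have hgint : Integrable g ν := by
    refine ⟨hg_meas.aestronglyMeasurable, ?_⟩
    rw [hasFiniteIntegral_iff_ofReal (Filter.Eventually.of_forall hg_nonneg)]
    rw [lintegral_countable' (fun j => ENNReal.ofReal (g j))]
    rw [tsum_eq_zero_add' ENNReal.summable]
    rw [hν0, mul_zero, zero_add]
    have heach : ∀ k : ℕ, ENNReal.ofReal (g (k + 1)) * ν {k + 1}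
        = ENNReal.ofReal ((p * exp θ) * r ^ k) := by
      intro k
      rw [hνj (k + 1) (by omega), show k + 1 - 1 = k from rfl,
        ← ENNReal.ofReal_mul (hg_nonneg _), hterm k]
    rw [tsum_congr heach,
      ← ENNReal.ofReal_tsum_of_nonneg
        (fun k => mul_nonneg (mul_nonneg hp0.le (Real.exp_pos θ).le) (pow_nonneg hr0 k))
        hsum_r]
    exact ENNReal.ofReal_lt_top
  have hint : Integrable (fun ω => exp (θ * (Y ω : ℝ))) μ := by
    have := (integrable_map_measure hg_meas.aestronglyMeasurable hY.aemeasurable).mp hgint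
    exact this
  refine ⟨hint, ?_⟩
  -- compute the mgf
  set f : ℕ → ℝ := fun j => (ν {j}).toReal * g j with hf_def
  have hf0 : f 0 = 0 := by rw [hf_def]; simp [hν0]
  have hfk : ∀ k : ℕ, f (k + 1) = (p * exp θ) * r ^ k := by
    intro k
    rw [hf_def]
    simp only []
    rw [hνj (k + 1) (by omega), show k + 1 - 1 = k from rfl,
      ENNReal.toReal_ofReal (mul_nonneg (pow_nonneg (by linarith) k) hp0.le)]
    rw [← hterm k]; ring
  have hfs : Summable f := by
    have h1 : (fun k : ℕ => f (k + 1)) = fun k : ℕ => (p * exp θ) * r ^ k :=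
      funext fun k => hfk k
    exact (summable_nat_add_iff 1).mp (h1 ▸ hsum_r)
  have hmgf_eq : mgf (fun ω => (Y ω : ℝ)) μ θ = ∑' j : ℕ, f j := by
    rw [mgf]
    have hmap : ∫ ω, exp (θ * (Y ω : ℝ)) ∂μ = ∫ j, g j ∂ν := by
      rw [hν_def, integral_map hY.aemeasurable hg_meas.aestronglyMeasurable]
    rw [hmap, integral_countable' hgint]
    exact tsum_congr fun j => by rw [hf_def]; simp [smul_eq_mul, measureReal_def]
  have htsum : ∑' j : ℕ, f j = (p * exp θ) * (1 - r)⁻¹ := by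
    rw [Summable.tsum_eq_zero_add hfs, hf0, zero_add, tsum_congr hfk, tsum_mul_left,
      tsum_geometric_of_lt_one hr0 hr1]
  rw [hmgf_eq, htsum]
  have hpθ : 0 < p - θ := by linarith
  rw [← div_eq_mul_inv, div_le_div_iff₀ h1r hpθ]
  have hkey : p * (exp θ * (1 - θ)) ≤ p * 1 := mul_le_mul_of_nonneg_left hexpθ hp0.le
  rw [hr_def]
  nlinarith [hkey]



lemma sum_inv_bound (m : ℕ) (hm : 2 ≤ m) :
    ∑ i ∈ Finset.range (m - 1), (1:ℝ) / (((i:ℝ) + 1) * ((m:ℝ) - ((i:ℝ) + 1)))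
      ≤ 2 / m * Real.logb 2 m := by
  have hmR : (2:ℝ) ≤ (m:ℝ) := by exact_mod_cast hm
  have hsplit : ∀ i ∈ Finset.range (m - 1),
      (1:ℝ) / (((i:ℝ) + 1) * ((m:ℝ) - ((i:ℝ) + 1)))
        = 1 / (m:ℝ) * (1 / ((i:ℝ) + 1) + 1 / ((m:ℝ) - ((i:ℝ) + 1))) := by
    intro i hi
    have hi2 : i + 2 ≤ m := by have := Finset.mem_range.mp hi; omega
    have hi' : (i:ℝ) + 2 ≤ (m:ℝ) := by exact_mod_cast hi2
    have h1 : (0:ℝ) < (i:ℝ) + 1 := by positivity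
    have h2 : (0:ℝ) < (m:ℝ) - ((i:ℝ) + 1) := by linarith
    field_simp
    ring
  rw [Finset.sum_congr rfl hsplit, ← Finset.mul_sum, Finset.sum_add_distrib]
  have hreflect : ∑ i ∈ Finset.range (m - 1), (1:ℝ) / ((m:ℝ) - ((i:ℝ) + 1))
      = ∑ i ∈ Finset.range (m - 1), (1:ℝ) / ((i:ℝ) + 1) := by
    rw [← Finset.sum_range_reflect (fun i => (1:ℝ) / ((i:ℝ) + 1)) (m - 1)]
    apply Finset.sum_congr rfl
    intro i hi
    have hi' := Finset.mem_range.mp hi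
    congr 1
    have h2 : m - 1 - 1 - i + (i + 2) = m := by omega
    have h3 : ((m - 1 - 1 - i : ℕ):ℝ) + ((i:ℝ) + 2) = (m:ℝ) := by exact_mod_cast h2
    linarith
  rw [hreflect]
  have hH : ∑ i ∈ Finset.range (m - 1), (1:ℝ) / ((i:ℝ) + 1) ≤ Real.logb 2 m := by
    have := harmonic_le_logb_two (m - 1) (by omega)
    have hcast : ((m - 1 : ℕ):ℝ) + 1 = (m:ℝ) := by
      have : m - 1 + 1 = m := by omega
      exact_mod_cast this
    rwa [hcast] at this
  have hm0 : (0:ℝ) < (m:ℝ) := by linarith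
  have hHnn : 0 ≤ ∑ i ∈ Finset.range (m - 1), (1:ℝ) / ((i:ℝ) + 1) :=
    Finset.sum_nonneg fun i _ => by positivity
  calc 1 / (m:ℝ) * (∑ i ∈ Finset.range (m - 1), (1:ℝ) / ((i:ℝ) + 1)
        + ∑ i ∈ Finset.range (m - 1), (1:ℝ) / ((i:ℝ) + 1))
      = 2 / (m:ℝ) * ∑ i ∈ Finset.range (m - 1), (1:ℝ) / ((i:ℝ) + 1) := by ring
    _ ≤ 2 / m * Real.logb 2 m := by
        apply mul_le_mul_of_nonneg_left hH (by positivity)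




set_option maxHeartbeats 1000000 in
/-- Upper tail bound for a slowed one-way epidemic: `X = X_1 + ⋯ + X_{m-1}` where
`X_i` is geometric with success probability `(ρ/4)·i·(m-i)/(n·(n-1))`; then
`P(X > (16/ρ)·(n²/m)·(log₂ m + 2γ·log₂ n)) ≤ 2·n^{-γ}`. -/
theorem slowed_one_way_epidemic_upper_tail
    {Ω : Type*} [MeasurableSpace Ω] (μ : Measure Ω) [IsProbabilityMeasure μ]
    (ρ : ℝ) (hρ0 : 0 < ρ) (hρ1 : ρ ≤ 1)
    (m n : ℕ) (hm : 2 ≤ m) (hmn : m ≤ n)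
    (X : Fin (m - 1) → Ω → ℕ)
    (hmeas : ∀ i, Measurable (X i))
    (hindep : iIndepFun X μ)
    (hgeom : ∀ i : Fin (m - 1), ∀ j : ℕ, 1 ≤ j →
      μ {ω | X i ω = j}
        = ENNReal.ofReal
            ((1 - (ρ / 4) * (((i : ℝ) + 1) * ((m : ℝ) - ((i : ℝ) + 1)))
                    / ((n : ℝ) * ((n : ℝ) - 1))) ^ (j - 1)
              * ((ρ / 4) * (((i : ℝ) + 1) * ((m : ℝ) - ((i : ℝ) + 1)))
                    / ((n : ℝ) * ((n : ℝ) - 1)))))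
    (γ : ℝ) (hγ : 0 < γ) :
    μ {ω | (16 / ρ) * ((n : ℝ) ^ 2 / m) * (Real.logb 2 m + 2 * γ * Real.logb 2 n)
            < ∑ i, (X i ω : ℝ)}
      ≤ ENNReal.ofReal (2 * (n : ℝ) ^ (-γ)) := by
  have hmR : (2:ℝ) ≤ (m:ℝ) := by exact_mod_cast hm
  have hnR : (2:ℝ) ≤ (n:ℝ) := by exact_mod_cast le_trans hm hmn
  have hmnR : (m:ℝ) ≤ (n:ℝ) := by exact_mod_cast hmn
  have hnn : (0:ℝ) < (n:ℝ) * ((n:ℝ) - 1) := by nlinarith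
  set T : ℝ := (16 / ρ) * ((n : ℝ) ^ 2 / m) * (Real.logb 2 m + 2 * γ * Real.logb 2 n) with hT
  set P : Fin (m - 1) → ℝ :=
    fun i => (ρ / 4) * (((i : ℝ) + 1) * ((m : ℝ) - ((i : ℝ) + 1)))
      / ((n : ℝ) * ((n : ℝ) - 1)) with hPdef
  set pstar : ℝ := (ρ / 4) * ((m:ℝ) - 1) / ((n:ℝ) * ((n:ℝ) - 1)) with hpstar
  set θ : ℝ := pstar / 2 with hθdef
  have hbounds : ∀ i : Fin (m - 1), 1 ≤ (i:ℝ) + 1 ∧ (i:ℝ) + 2 ≤ (m:ℝ) := by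
    intro i
    constructor
    · have : (0:ℝ) ≤ (i:ℝ) := Nat.cast_nonneg _
      linarith
    · have h2 : (i:ℕ) + 2 ≤ m := by have := i.isLt; omega
      exact_mod_cast h2
  have hpstar0 : 0 < pstar := by
    rw [hpstar]
    apply div_pos _ hnn
    nlinarith
  have hP0 : ∀ i, 0 < P i := by
    intro i
    obtain ⟨ha, hb⟩ := hbounds i
    rw [hPdef]
    apply div_pos _ hnn
    apply mul_pos (by linarith)
    nlinarith
  have hPs : ∀ i, pstar ≤ P i := by
    intro i
    obtain ⟨ha, hb⟩ := hbounds i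
    rw [hpstar, hPdef]
    rw [div_le_div_iff_of_pos_right hnn]
    have hq : 0 ≤ (((i:ℝ) + 1) - 1) * (((m:ℝ) - ((i:ℝ) + 1)) - 1) :=
      mul_nonneg (by linarith) (by linarith)
    nlinarith [mul_nonneg hρ0.le hq]
  have hP1 : ∀ i, P i < 1 := by
    intro i
    obtain ⟨ha, hb⟩ := hbounds i
    rw [hPdef]
    simp only []
    rw [div_lt_one hnn]
    have haub : (i:ℝ) + 1 ≤ (m:ℝ) - 1 := by linarith
    have hbub : (m:ℝ) - ((i:ℝ) + 1) ≤ (m:ℝ) - 1 := by linarith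
    have hab : ((i:ℝ) + 1) * ((m:ℝ) - ((i:ℝ) + 1)) ≤ ((m:ℝ) - 1) * ((m:ℝ) - 1) :=
      mul_le_mul haub hbub (by linarith) (by linarith)
    nlinarith
  have hθ0 : 0 ≤ θ := by rw [hθdef]; linarith
  have hθlt : ∀ i, θ < P i := by
    intro i
    have := hPs i
    rw [hθdef]
    linarith
  have hgm : ∀ i : Fin (m - 1), Integrable (fun ω => exp (θ * ((X i ω : ℕ) : ℝ))) μ ∧
      mgf (fun ω => ((X i ω : ℕ) : ℝ)) μ θ ≤ P i / (P i - θ) := by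
    intro i
    refine geom_mgf μ (X i) (hmeas i) (P i) (hP0 i) (hP1 i) ?_ θ hθ0 (hθlt i)
    intro j hj
    rw [hPdef]
    exact hgeom i j hj
  set Y : Fin (m - 1) → Ω → ℝ := fun i ω => ((X i ω : ℕ) : ℝ) with hYdef
  have hYmeas : ∀ i, Measurable (Y i) := fun i => measurable_from_nat.comp (hmeas i)
  have hYindep : iIndepFun Y μ :=
    hindep.comp (fun _ => (Nat.cast : ℕ → ℝ)) (fun _ => measurable_from_nat)
  have hint_sum : Integrable (fun ω => exp (θ * (∑ i, Y i) ω)) μ :=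
    hYindep.integrable_exp_mul_sum hYmeas (fun i _ => (hgm i).1)
  have hchern : (μ {ω | T ≤ (∑ i, Y i) ω}).toReal
      ≤ exp (-θ * T) * mgf (∑ i, Y i) μ θ :=
    measure_ge_le_exp_mul_mgf T hθ0 hint_sum
  have hprod : mgf (∑ i, Y i) μ θ = ∏ i, mgf (Y i) μ θ :=
    hYindep.mgf_sum hYmeas Finset.univ
  -- bound each factor by an exponential
  have hPP : ∀ i : Fin (m - 1), P i / (P i - θ) ≤ exp (pstar / P i) := by
    intro i
    have hd : 0 < P i - θ := by have := hθlt i; linarith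
    have hx1 : pstar / P i ≤ 1 := (div_le_one (hP0 i)).mpr (hPs i)
    have hxP : pstar / P i * P i = pstar := div_mul_cancel₀ _ (ne_of_gt (hP0 i))
    have he : 1 + pstar / P i ≤ exp (pstar / P i) := by
      linarith [Real.add_one_le_exp (pstar / P i)]
    rw [div_le_iff₀ hd]
    have hmul : (1 + pstar / P i) * (P i - θ) ≤ exp (pstar / P i) * (P i - θ) :=
      mul_le_mul_of_nonneg_right he hd.le
    have hexpand : (1 + pstar / P i) * (P i - θ)
        = P i - θ + pstar - (pstar / P i) * θ := by
      rw [add_mul, one_mul, mul_sub, hxP]; ring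
    have hxθ : (pstar / P i) * θ ≤ 1 * θ := mul_le_mul_of_nonneg_right hx1 hθ0
    have hθval : pstar - θ = θ := by rw [hθdef]; ring
    linarith
  have hsum_ratio : ∑ i, pstar / P i ≤ ((m:ℝ) - 1) * (2 / m * Real.logb 2 m) := by
    have hratio : ∀ i : Fin (m - 1), pstar / P i
        = ((m:ℝ) - 1) * (1 / (((i:ℝ) + 1) * ((m:ℝ) - ((i:ℝ) + 1)))) := by
      intro i
      obtain ⟨ha, hb⟩ := hbounds i
      rw [hpstar, hPdef]
      simp only []
      have h1 : (0:ℝ) < ((i:ℝ) + 1) * ((m:ℝ) - ((i:ℝ) + 1)) :=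
        mul_pos (by linarith) (by linarith)
      have h2 : (n:ℝ) * ((n:ℝ) - 1) ≠ 0 := ne_of_gt hnn
      have h5 : ρ ≠ 0 := ne_of_gt hρ0
      rw [div_div_div_cancel_right₀ h2]
      field_simp
    rw [Finset.sum_congr rfl (fun i _ => hratio i), ← Finset.mul_sum]
    apply mul_le_mul_of_nonneg_left _ (by linarith : (0:ℝ) ≤ (m:ℝ) - 1)
    have hsb := sum_inv_bound m hm
    rwa [← Fin.sum_univ_eq_sum_range
      (fun j : ℕ => (1:ℝ) / (((j:ℝ) + 1) * ((m:ℝ) - ((j:ℝ) + 1)))) (m - 1)] at hsb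
  have hθT : θ * T = 2 * (((m:ℝ) - 1) / m) * ((n:ℝ) / ((n:ℝ) - 1))
      * (Real.logb 2 m + 2 * γ * Real.logb 2 n) := by
    rw [hθdef, hpstar, hT]
    have h2 : (n:ℝ) ≠ 0 := by linarith
    have h3 : (n:ℝ) - 1 ≠ 0 := by linarith
    have h4 : (m:ℝ) ≠ 0 := by linarith
    have h5 : ρ ≠ 0 := ne_of_gt hρ0
    field_simp
    ring
  have hlogm : 0 ≤ Real.logb 2 m := Real.logb_nonneg (by norm_num) (by linarith)
  have hlogn : 0 ≤ Real.logb 2 n := Real.logb_nonneg (by norm_num) (by linarith)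
  have hkey : γ * Real.log n ≤ θ * T - ∑ i, pstar / P i := by
    have hfrac : 1 ≤ (n:ℝ) / ((n:ℝ) - 1) := by
      rw [le_div_iff₀ (by linarith)]; linarith
    have hL : 0 ≤ Real.logb 2 m + 2 * γ * Real.logb 2 n := by
      have := mul_nonneg (mul_nonneg (by norm_num : (0:ℝ) ≤ 2) hγ.le) hlogn
      linarith
    have hc2 : (1:ℝ)/2 ≤ ((m:ℝ) - 1) / m := by
      rw [div_le_div_iff₀ (by norm_num) (by linarith)]; linarith
    have hc0 : (0:ℝ) ≤ ((m:ℝ) - 1) / m := by linarith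
    have hθT_ge : 2 * (((m:ℝ) - 1) / m) * (Real.logb 2 m + 2 * γ * Real.logb 2 n)
        ≤ θ * T := by
      rw [hθT]
      nlinarith [mul_nonneg (mul_nonneg (by linarith : (0:ℝ) ≤ 2 * (((m:ℝ) - 1) / m)) hL)
        (sub_nonneg.mpr hfrac)]
    have hdiff : 2 * (((m:ℝ) - 1) / m) * (Real.logb 2 m + 2 * γ * Real.logb 2 n)
        - ((m:ℝ) - 1) * (2 / m * Real.logb 2 m)
        = 4 * γ * (((m:ℝ) - 1) / m) * Real.logb 2 n := by ring
    have hge : 2 * γ * Real.logb 2 n ≤ 4 * γ * (((m:ℝ) - 1) / m) * Real.logb 2 n := by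
      nlinarith [mul_nonneg (mul_nonneg (by linarith : (0:ℝ) ≤ 4 * γ) hlogn)
        (by linarith : (0:ℝ) ≤ ((m:ℝ) - 1) / m - 1/2)]
    have hfinal : γ * Real.log n ≤ 2 * γ * Real.logb 2 n := by
      have hlog2pos : (0:ℝ) < Real.log 2 := Real.log_pos (by norm_num)
      have hlog2lt1 : Real.log 2 < 1 := by linarith [Real.log_two_lt_d9]
      have hlognn : (0:ℝ) ≤ Real.log n := Real.log_nonneg (by linarith)
      rw [Real.logb, mul_div_assoc', le_div_iff₀ hlog2pos]
      nlinarith [mul_nonneg hγ.le hlognn]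
    linarith
  have hsub : {ω | T < ∑ i, ((X i ω : ℕ) : ℝ)} ⊆ {ω | T ≤ (∑ i, Y i) ω} := by
    intro ω hω
    simp only [Set.mem_setOf_eq, Finset.sum_apply] at *
    exact le_of_lt hω
  have hPT : (μ {ω | T ≤ (∑ i, Y i) ω}).toReal ≤ 2 * (n:ℝ) ^ (-γ) := by
    have h1 : exp (-θ * T) * mgf (∑ i, Y i) μ θ
        ≤ exp (-θ * T) * exp (∑ i, pstar / P i) := by
      apply mul_le_mul_of_nonneg_left _ (Real.exp_nonneg _)
      rw [hprod]
      calc ∏ i, mgf (Y i) μ θ ≤ ∏ i, exp (pstar / P i) :=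
            Finset.prod_le_prod (fun i _ => mgf_nonneg)
              (fun i _ => le_trans (hgm i).2 (hPP i))
        _ = exp (∑ i, pstar / P i) := (Real.exp_sum _ _).symm
    have h2 : exp (-θ * T) * exp (∑ i, pstar / P i)
        = exp (∑ i, pstar / P i - θ * T) := by
      rw [← Real.exp_add]; congr 1; ring
    have h3 : exp (∑ i, pstar / P i - θ * T) ≤ exp (-(γ * Real.log n)) := by
      apply Real.exp_le_exp.mpr; linarith
    have h4 : exp (-(γ * Real.log n)) = (n:ℝ) ^ (-γ) := by
      rw [Real.rpow_def_of_pos (by linarith : (0:ℝ) < (n:ℝ))]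
      congr 1; ring
    have h5 : (n:ℝ) ^ (-γ) ≤ 2 * (n:ℝ) ^ (-γ) := by
      have := Real.rpow_nonneg (by linarith : (0:ℝ) ≤ (n:ℝ)) (-γ)
      linarith
    calc (μ {ω | T ≤ (∑ i, Y i) ω}).toReal
        ≤ exp (-θ * T) * mgf (∑ i, Y i) μ θ := hchern
      _ ≤ exp (-θ * T) * exp (∑ i, pstar / P i) := h1
      _ = exp (∑ i, pstar / P i - θ * T) := h2
      _ ≤ exp (-(γ * Real.log n)) := h3
      _ = (n:ℝ) ^ (-γ) := h4
      _ ≤ 2 * (n:ℝ) ^ (-γ) := h5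
  calc μ {ω | T < ∑ i, ((X i ω : ℕ) : ℝ)} ≤ μ {ω | T ≤ (∑ i, Y i) ω} :=
        measure_mono hsub
    _ ≤ ENNReal.ofReal (2 * (n:ℝ) ^ (-γ)) :=
        (ENNReal.le_ofReal_iff_toReal_le (measure_ne_top μ _) (by positivity)).mpr hPT
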